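/- arXiv:2012.12309 — 5 statements merged into one kernel-verified Lean document; each statement's English description precedes it below -/
import Mathlib

section
/- The influence function under the influence barricade model is not submodular: there exists an influence network (V, W, b) together with sets S₁ ⊆ S₂ ⊆ V and a node u ∈ V \ S₂ such that σ(S₁ ∪ {u}) − σ(S₁) < σ(S₂ ∪ {u}) − σ(S₂). -/
/-!
Influence barricade model: a finite vertex set `V : Finset ι`, edge weights
`W : ι → ι → ℝ` (an edge `u → v` exists iff `W u v > 0`), and barricade
factors `b : ι → ℝ`.  For a seed set `S ⊆ V`, the diffusion process is
`A 0 = S` and `A (t+1) = A t ∪ {u ∈ V : ∑ v ∈ A t, W v u ≥ b u}`.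
-/

open Finset

open Classical in
/-- One step of the diffusion process under the influence barricade model. -/
noncomputable def diffStep {ι : Type*} [DecidableEq ι] (V : Finset ι)
    (W : ι → ι → ℝ) (b : ι → ℝ) (A : Finset ι) : Finset ι :=
  A ∪ V.filter (fun u => b u ≤ ∑ v ∈ A, W v u)

/-- `activeSet V W b S t` is the set `A_t(S)` of nodes active at time `t`. -/
noncomputable def activeSet {ι : Type*} [DecidableEq ι] (V : Finset ι)
    (W : ι → ι → ℝ) (b : ι → ℝ) (S : Finset ι) : ℕ → Finset ι
  | 0 => S
  | t + 1 => diffStep V W b (activeSet V W b S t)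

/-- The final active set `A(S) = A_{|V|}(S)`. -/
noncomputable def finalActive {ι : Type*} [DecidableEq ι] (V : Finset ι)
    (W : ι → ι → ℝ) (b : ι → ℝ) (S : Finset ι) : Finset ι :=
  activeSet V W b S V.card

/-- `S` achieves full influenceability: every node is eventually active. -/
def FullInf {ι : Type*} [DecidableEq ι] (V : Finset ι) (W : ι → ι → ℝ)
    (b : ι → ℝ) (S : Finset ι) : Prop :=
  finalActive V W b S = V

/-- `σ(S)`: the number of nodes active at the end of the influence process. -/
noncomputable def sigmaInf {ι : Type*} [DecidableEq ι] (V : Finset ι)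
    (W : ι → ι → ℝ) (b : ι → ℝ) (S : Finset ι) : ℕ :=
  (finalActive V W b S).card

/-- The minimum seed number: the least cardinality of a seed set achieving
full influenceability. -/
noncomputable def minSeed {ι : Type*} [DecidableEq ι] (V : Finset ι)
    (W : ι → ι → ℝ) (b : ι → ℝ) : ℕ :=
  sInf {n | ∃ S : Finset ι, S ⊆ V ∧ S.card = n ∧ FullInf V W b S}


lemma activeSet_fix {ι : Type*} [DecidableEq ι] (V : Finset ι)
    (W : ι → ι → ℝ) (b : ι → ℝ) (S : Finset ι)
    (h : diffStep V W b S = S) : ∀ t, activeSet V W b S t = S := by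
  intro t
  induction t with
  | zero => rfl
  | succ t ih => rw [activeSet, ih, h]

lemma activeSet_succ_shift {ι : Type*} [DecidableEq ι] (V : Finset ι)
    (W : ι → ι → ℝ) (b : ι → ℝ) (S : Finset ι) (t : ℕ) :
    activeSet V W b S (t + 1) = activeSet V W b (diffStep V W b S) t := by
  induction t with
  | zero => rfl
  | succ t ih => rw [activeSet, ih]; rfl

noncomputable def myW : Fin 3 → Fin 3 → ℝ :=
  fun v u => if u = 2 ∧ (v = 0 ∨ v = 1) then (1:ℝ) else 0

noncomputable def myb : Fin 3 → ℝ := fun u => if u = 2 then (2:ℝ) else 1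

lemma myW_nonneg : ∀ u v, 0 ≤ myW u v := by
  intro u v; unfold myW; split <;> norm_num

lemma myb_nonneg : ∀ u, 0 ≤ myb u := by
  intro u; unfold myb; split <;> norm_num

open Classical in
lemma diffStep_fix_of (S : Finset (Fin 3))
    (h : ∀ u ∈ Finset.univ.filter (fun u => myb u ≤ ∑ v ∈ S, myW v u), u ∈ S) :
    diffStep Finset.univ myW myb S = S := by
  unfold diffStep
  rw [Finset.union_eq_left]
  intro u hu
  exact h u (by convert hu using 2)

lemma fix_empty : diffStep Finset.univ myW myb (∅ : Finset (Fin 3)) = ∅ := by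
  apply diffStep_fix_of
  intro u hu
  simp only [Finset.mem_filter] at hu
  exfalso
  fin_cases u <;> simp [myb, myW] at hu <;> norm_num at hu

lemma fix_one : diffStep Finset.univ myW myb ({1} : Finset (Fin 3)) = {1} := by
  apply diffStep_fix_of
  intro u hu
  simp only [Finset.mem_filter] at hu
  fin_cases u <;> simp [myb, myW, Finset.filter_singleton] at hu ⊢ <;> norm_num at hu

lemma fix_zero : diffStep Finset.univ myW myb ({0} : Finset (Fin 3)) = {0} := by
  apply diffStep_fix_of
  intro u hu
  simp only [Finset.mem_filter] at hu
  fin_cases u <;> simp [myb, myW, Finset.filter_singleton] at hu ⊢ <;> norm_num at hu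

lemma fix_univ : diffStep Finset.univ myW myb (Finset.univ : Finset (Fin 3)) = Finset.univ := by
  unfold diffStep
  rw [Finset.union_eq_left]
  exact Finset.filter_subset _ _

lemma step_zeroone : diffStep Finset.univ myW myb ({0, 1} : Finset (Fin 3)) = Finset.univ := by
  unfold diffStep
  apply Finset.eq_univ_of_forall
  intro u
  fin_cases u
  · simp
  · simp
  · refine Finset.mem_union_right _ ?_
    rw [Finset.mem_filter]
    refine ⟨Finset.mem_univ _, ?_⟩
    rw [Finset.sum_pair (by decide)]
    simp [myb, myW]
    norm_num

lemma final_empty : finalActive Finset.univ myW myb (∅ : Finset (Fin 3)) = ∅ :=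
  activeSet_fix _ _ _ _ fix_empty _

lemma final_one : finalActive Finset.univ myW myb ({1} : Finset (Fin 3)) = {1} :=
  activeSet_fix _ _ _ _ fix_one _

lemma final_zero : finalActive Finset.univ myW myb ({0} : Finset (Fin 3)) = {0} :=
  activeSet_fix _ _ _ _ fix_zero _

lemma final_zeroone : finalActive Finset.univ myW myb ({0, 1} : Finset (Fin 3)) = Finset.univ := by
  unfold finalActive
  have h3 : (Finset.univ : Finset (Fin 3)).card = 3 := by decide
  rw [h3]
  rw [show activeSet Finset.univ myW myb ({0,1} : Finset (Fin 3)) 3 = activeSet Finset.univ myW myb (diffStep Finset.univ myW myb {0,1}) 2 from activeSet_succ_shift _ _ _ _ 2, step_zeroone]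
  exact activeSet_fix _ _ _ _ fix_univ _

/-- the influence function `σ` under the influence barricade
model is not submodular. -/
theorem influence_not_submodular :
    ∃ (n : ℕ) (V : Finset (Fin n)) (W : Fin n → Fin n → ℝ) (b : Fin n → ℝ),
      (∀ u v, 0 ≤ W u v) ∧ (∀ u, 0 ≤ b u) ∧
      ∃ (S₁ S₂ : Finset (Fin n)) (u : Fin n),
        S₁ ⊆ S₂ ∧ S₂ ⊆ V ∧ u ∈ V ∧ u ∉ S₂ ∧
        (sigmaInf V W b (S₁ ∪ {u}) : ℤ) - (sigmaInf V W b S₁ : ℤ) <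
          (sigmaInf V W b (S₂ ∪ {u}) : ℤ) - (sigmaInf V W b S₂ : ℤ) := by
  refine ⟨3, Finset.univ, myW, myb, myW_nonneg, myb_nonneg,
    ∅, {0}, 1, Finset.empty_subset _, Finset.subset_univ _, Finset.mem_univ _, by decide, ?_⟩
  have e1 : (∅ : Finset (Fin 3)) ∪ {1} = {1} := by decide
  have e2 : ({0} : Finset (Fin 3)) ∪ {1} = {0, 1} := by decide
  rw [e1, e2]
  unfold sigmaInf
  rw [final_empty, final_one, final_zero, final_zeroone]
  decide
end

section
/- Let G = (V, E) be a finite simple undirected graph, and form the influence network on V with W(u,v) = 1 if {u,v} ∈ E and W(u,v) = 0 otherwise, and with b(v) equal to the number of neighbors of v in G. Then a set S ⊆ V achieves full influenceability in this influence network if and only if S is a vertex cover of G (i.e., every edge of E has at least one endpoint in S). -/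
/-!
Influence barricade model: a finite vertex set `V : Finset ι`, edge weights
`W : ι → ι → ℝ` (an edge `u → v` exists iff `W u v > 0`), and barricade
factors `b : ι → ℝ`.  For a seed set `S ⊆ V`, the diffusion process is
`A 0 = S` and `A (t+1) = A t ∪ {u ∈ V : ∑ v ∈ A t, W v u ≥ b u}`.
-/

open Finset

section Aux

variable {α : Type*} [Fintype α] [DecidableEq α] (G : SimpleGraph α) [DecidableRel G.Adj]

private lemma sum_weight_eq (A : Finset α) (u : α) :
    ∑ v ∈ A, (if G.Adj v u then (1 : ℝ) else 0) =
      ((A.filter (fun v => G.Adj v u)).card : ℝ) := by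
  simp [Finset.sum_boole]

private lemma not_mem_diffStep {u v : α} {A : Finset α} (huv : G.Adj u v)
    (hu : u ∉ A) (hv : v ∉ A) :
    u ∉ diffStep Finset.univ (fun u v => if G.Adj u v then (1 : ℝ) else 0)
        (fun v => (G.degree v : ℝ)) A := by
  simp only [diffStep, mem_union, mem_filter, mem_univ, true_and]
  push_neg
  refine ⟨hu, ?_⟩
  rw [sum_weight_eq]
  have hsub : A.filter (fun w => G.Adj w u) ⊆ (G.neighborFinset u).erase v := by
    intro w hw
    simp only [mem_filter] at hw
    simp only [mem_erase, SimpleGraph.mem_neighborFinset]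
    exact ⟨fun h => hv (h ▸ hw.1), hw.2.symm⟩
  have hcard : (A.filter (fun w => G.Adj w u)).card ≤ G.degree u - 1 := by
    calc _ ≤ ((G.neighborFinset u).erase v).card := Finset.card_le_card hsub
    _ = G.degree u - 1 := by
        rw [Finset.card_erase_of_mem (by simpa using huv), SimpleGraph.card_neighborFinset_eq_degree]
  have hdeg : 1 ≤ G.degree u := by
    rw [← SimpleGraph.card_neighborFinset_eq_degree]
    exact Finset.card_pos.mpr ⟨v, by simpa using huv⟩
  have : (A.filter (fun w => G.Adj w u)).card < G.degree u :=
    lt_of_le_of_lt hcard (Nat.sub_lt hdeg one_pos)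
  exact_mod_cast this

private lemma diffStep_seed_eq_univ
    (hcov : ∀ u v : α, G.Adj u v → u ∈ S ∨ v ∈ S) :
    diffStep Finset.univ (fun u v => if G.Adj u v then (1 : ℝ) else 0)
        (fun v => (G.degree v : ℝ)) S = Finset.univ := by
  apply Finset.eq_univ_of_forall
  intro u
  simp only [diffStep, mem_union, mem_filter, mem_univ, true_and]
  by_cases hu : u ∈ S
  · exact Or.inl hu
  · refine Or.inr ?_
    rw [sum_weight_eq]
    have hsub : G.neighborFinset u ⊆ S.filter (fun w => G.Adj w u) := by
      intro w hw
      rw [SimpleGraph.mem_neighborFinset] at hw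
      refine Finset.mem_filter.mpr ⟨?_, hw.symm⟩
      rcases hcov w u hw.symm with h | h
      · exact h
      · exact absurd h hu
    have := Finset.card_le_card hsub
    rw [SimpleGraph.card_neighborFinset_eq_degree] at this
    exact_mod_cast this

private lemma diffStep_univ_eq_univ :
    diffStep Finset.univ (fun u v => if G.Adj u v then (1 : ℝ) else 0)
        (fun v => (G.degree v : ℝ)) Finset.univ = Finset.univ := by
  unfold diffStep
  exact Finset.Subset.antisymm
    (Finset.union_subset (Finset.subset_univ _) (Finset.filter_subset _ _))
    Finset.subset_union_left

end Aux

/-- in the influence network associated to a finite simple graph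
`G` (weight `1` on each edge, barricade factor of `v` equal to the degree of
`v`), a set `S` achieves full influenceability iff `S` is a vertex cover. -/
theorem fullInf_iff_vertexCover {α : Type*} [Fintype α] [DecidableEq α]
    (G : SimpleGraph α) [DecidableRel G.Adj] (S : Finset α) :
    FullInf (Finset.univ : Finset α)
        (fun u v => if G.Adj u v then (1 : ℝ) else 0)
        (fun v => (G.degree v : ℝ)) S ↔
      ∀ u v : α, G.Adj u v → u ∈ S ∨ v ∈ S := by
  set W : α → α → ℝ := fun u v => if G.Adj u v then (1 : ℝ) else 0 with hW
  set b : α → ℝ := fun v => (G.degree v : ℝ) with hb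
  constructor
  · -- full influence → vertex cover
    intro hfull u v huv
    by_contra hc
    push_neg at hc
    obtain ⟨hu, hv⟩ := hc
    have key : ∀ t, u ∉ activeSet Finset.univ W b S t ∧
        v ∉ activeSet Finset.univ W b S t := by
      intro t
      induction t with
      | zero => exact ⟨hu, hv⟩
      | succ t ih =>
        exact ⟨not_mem_diffStep G huv ih.1 ih.2,
          not_mem_diffStep G huv.symm ih.2 ih.1⟩
    have := (key (Finset.univ : Finset α).card).1
    rw [show activeSet Finset.univ W b S (Finset.univ : Finset α).card
        = finalActive Finset.univ W b S from rfl, hfull] at this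
    exact this (Finset.mem_univ u)
  · -- vertex cover → full influence
    intro hcov
    have hstep : ∀ t, activeSet Finset.univ W b S (t + 1) = Finset.univ := by
      intro t
      induction t with
      | zero =>
        show diffStep Finset.univ W b S = Finset.univ
        exact diffStep_seed_eq_univ G hcov
      | succ t ih =>
        show diffStep Finset.univ W b (activeSet Finset.univ W b S (t + 1)) = Finset.univ
        rw [ih]
        exact diffStep_univ_eq_univ G
    unfold FullInf finalActive
    rcases Nat.eq_zero_or_pos (Finset.univ : Finset α).card with h0 | hpos
    · rw [h0]
      have : (Finset.univ : Finset α) = ∅ := Finset.card_eq_zero.mp h0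
      rw [this]
      exact Finset.subset_empty.mp (this ▸ Finset.subset_univ S)
    · obtain ⟨n, hn⟩ := Nat.exists_eq_add_of_lt hpos
      rw [hn]
      simpa using hstep n
end

section
/- Adding a bidirectional pair of edges changes the minimum seed number by at most one: let (V, W, b) be an influence network and v₁ ≠ v₂ nodes with W(v₁,v₂) = W(v₂,v₁) = 0. Let W' agree with W everywhere except W'(v₁,v₂) = w₁ and W'(v₂,v₁) = w₂ for some w₁, w₂ > 0. If m and m' denote the minimum seed numbers of (V, W, b) and (V, W', b) respectively, then 0 ≤ m − m' ≤ 1. -/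
/-!
Influence barricade model: a finite vertex set `V : Finset ι`, edge weights
`W : ι → ι → ℝ` (an edge `u → v` exists iff `W u v > 0`), and barricade
factors `b : ι → ℝ`.  For a seed set `S ⊆ V`, the diffusion process is
`A 0 = S` and `A (t+1) = A t ∪ {u ∈ V : ∑ v ∈ A t, W v u ≥ b u}`.
-/

open Finset

section Aux

variable {ι : Type*} [DecidableEq ι]

lemma subset_diffStep (V : Finset ι) (W : ι → ι → ℝ) (b : ι → ℝ) (A : Finset ι) :
    A ⊆ diffStep V W b A := Finset.subset_union_left

lemma activeSet_mono_time (V : Finset ι) (W : ι → ι → ℝ) (b : ι → ℝ) (S : Finset ι)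
    {s t : ℕ} (h : s ≤ t) : activeSet V W b S s ⊆ activeSet V W b S t := by
  induction t with
  | zero => simp [Nat.le_zero.mp h]
  | succ t ih =>
    rcases Nat.lt_or_ge s (t+1) with h' | h'
    · exact (ih (Nat.lt_succ_iff.mp h')).trans (subset_diffStep V W b _)
    · have : s = t + 1 := le_antisymm h h'
      simp [this]

lemma activeSet_subset_V (V : Finset ι) (W : ι → ι → ℝ) (b : ι → ℝ) {S : Finset ι}
    (hS : S ⊆ V) (t : ℕ) : activeSet V W b S t ⊆ V := by
  induction t with
  | zero => exact hS
  | succ t ih =>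
    simp only [activeSet, diffStep]
    exact Finset.union_subset ih (Finset.filter_subset _ _)

/-- Domination: larger weights and a larger seed give a larger active set. -/
lemma activeSet_le_mono (V : Finset ι) (W W'' : ι → ι → ℝ) (b : ι → ℝ)
    (hW : ∀ u v, 0 ≤ W u v) (hle : ∀ u v, W u v ≤ W'' u v)
    {S S'' : Finset ι} (hS : S ⊆ S'') (t : ℕ) :
    activeSet V W b S t ⊆ activeSet V W'' b S'' t := by
  induction t with
  | zero => exact hS
  | succ t ih =>
    intro u hu
    simp only [activeSet, diffStep, Finset.mem_union, Finset.mem_filter] at hu ⊢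
    rcases hu with hu | ⟨huV, hsum⟩
    · exact Or.inl (ih hu)
    · refine Or.inr ⟨huV, hsum.trans ?_⟩
      calc ∑ v ∈ activeSet V W b S t, W v u
          ≤ ∑ v ∈ activeSet V W'' b S'' t, W v u :=
            Finset.sum_le_sum_of_subset_of_nonneg ih (fun v _ _ => hW v u)
        _ ≤ ∑ v ∈ activeSet V W'' b S'' t, W'' v u :=
            Finset.sum_le_sum (fun v _ => hle v u)

lemma fullInf_self (V : Finset ι) (W : ι → ι → ℝ) (b : ι → ℝ) :
    FullInf V W b V := by
  have h : ∀ t, activeSet V W b V t = V := by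
    intro t
    induction t with
    | zero => rfl
    | succ t ih =>
      simp only [activeSet, ih, diffStep]
      exact Finset.union_eq_left.mpr (Finset.filter_subset _ _)
  exact h V.card

lemma minSeed_set_nonempty (V : Finset ι) (W : ι → ι → ℝ) (b : ι → ℝ) :
    {n | ∃ S : Finset ι, S ⊆ V ∧ S.card = n ∧ FullInf V W b S}.Nonempty :=
  ⟨V.card, V, Finset.Subset.refl _, rfl, fullInf_self V W b⟩

/-- Key lemma: if `x` is never activated later than `y` in the `W'` process,
then seeding `y` additionally lets the `W` process dominate the `W'` process,
where `W'` agrees with `W` except on edges into `x` from `y` and into `y`. -/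
lemma key_lemma (V : Finset ι) (W W' : ι → ι → ℝ) (b : ι → ℝ)
    (hW : ∀ u v, 0 ≤ W u v) (x y : ι) (hxy : x ≠ y)
    (hagreeX : ∀ v, v ≠ y → W' v x = W v x)
    (hagreeOther : ∀ v u, u ≠ x → u ≠ y → W' v u = W v u)
    (S' : Finset ι)
    (hfirst : ∀ t, y ∈ activeSet V W' b S' t → x ∈ activeSet V W' b S' t) :
    ∀ t, activeSet V W' b S' t ⊆ activeSet V W b (insert y S') t := by
  intro t
  induction t with
  | zero => exact Finset.subset_insert _ _
  | succ t ih =>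
    intro u hu
    have hyA : y ∈ activeSet V W b (insert y S') t :=
      activeSet_mono_time V W b _ (Nat.zero_le t) (Finset.mem_insert_self y S')
    simp only [activeSet, diffStep, Finset.mem_union, Finset.mem_filter] at hu ⊢
    by_cases huy : u = y
    · exact Or.inl (huy ▸ hyA)
    rcases hu with hu | ⟨huV, hsum⟩
    · exact Or.inl (ih hu)
    by_cases hux : u = x
    · -- u = x : y not yet active in W' process (else x already active, handled)
      by_cases hxA : u ∈ activeSet V W' b S' t
      · exact Or.inl (ih hxA)
      have hyNot : y ∉ activeSet V W' b S' t := by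
        intro h
        exact hxA (hux ▸ hfirst t h)
      refine Or.inr ⟨huV, hsum.trans ?_⟩
      have heq : ∑ v ∈ activeSet V W' b S' t, W' v u
          = ∑ v ∈ activeSet V W' b S' t, W v u := by
        refine Finset.sum_congr rfl (fun v hv => ?_)
        rw [hux]
        exact hagreeX v (fun h => hyNot (h ▸ hv))
      rw [heq]
      exact Finset.sum_le_sum_of_subset_of_nonneg ih (fun v _ _ => hW v u)
    · refine Or.inr ⟨huV, hsum.trans ?_⟩
      have heq : ∑ v ∈ activeSet V W' b S' t, W' v u
          = ∑ v ∈ activeSet V W' b S' t, W v u :=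
        Finset.sum_congr rfl (fun v _ => hagreeOther v u hux huy)
      rw [heq]
      exact Finset.sum_le_sum_of_subset_of_nonneg ih (fun v _ _ => hW v u)

end Aux

/-- adding a bidirectional pair of edges (between two previously
non-adjacent nodes) decreases the minimum seed number by at most one. -/
theorem minSeed_add_bidirectional_edges {ι : Type*} [DecidableEq ι]
    (V : Finset ι) (W W' : ι → ι → ℝ) (b : ι → ℝ)
    (hW : ∀ u v, 0 ≤ W u v) (hb : ∀ u, 0 ≤ b u)
    (v₁ v₂ : ι) (hv₁ : v₁ ∈ V) (hv₂ : v₂ ∈ V) (hne : v₁ ≠ v₂)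
    (h₁ : W v₁ v₂ = 0) (h₂ : W v₂ v₁ = 0)
    (w₁ w₂ : ℝ) (hw₁ : 0 < w₁) (hw₂ : 0 < w₂)
    (hW'₁ : W' v₁ v₂ = w₁) (hW'₂ : W' v₂ v₁ = w₂)
    (hagree : ∀ a c : ι, ¬(a = v₁ ∧ c = v₂) → ¬(a = v₂ ∧ c = v₁) →
      W' a c = W a c) :
    minSeed V W' b ≤ minSeed V W b ∧
      minSeed V W b ≤ minSeed V W' b + 1 := by
  have hle : ∀ u v, W u v ≤ W' u v := by
    intro u v
    by_cases h1 : u = v₁ ∧ v = v₂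
    · rw [h1.1, h1.2, h₁, hW'₁]; exact hw₁.le
    by_cases h2 : u = v₂ ∧ v = v₁
    · rw [h2.1, h2.2, h₂, hW'₂]; exact hw₂.le
    · rw [hagree u v h1 h2]
  constructor
  · -- minSeed V W' b ≤ minSeed V W b
    obtain ⟨S, hSV, hScard, hSfull⟩ :=
      Nat.sInf_mem (minSeed_set_nonempty V W b)
    refine Nat.sInf_le ⟨S, hSV, hScard, ?_⟩
    have h1 : V ⊆ finalActive V W' b S := by
      have hmono := activeSet_le_mono V W W' b hW hle (Finset.Subset.refl S) V.card
      calc V = finalActive V W b S := hSfull.symm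
        _ ⊆ finalActive V W' b S := hmono
    exact Finset.Subset.antisymm (activeSet_subset_V V W' b hSV V.card) h1
  · -- minSeed V W b ≤ minSeed V W' b + 1
    obtain ⟨S', hS'V, hS'card, hS'full⟩ :=
      Nat.sInf_mem (minSeed_set_nonempty V W' b)
    -- activation times of v₁ and v₂ in the W' process
    set T₁ : Set ℕ := {t | v₁ ∈ activeSet V W' b S' t} with hT₁
    set T₂ : Set ℕ := {t | v₂ ∈ activeSet V W' b S' t} with hT₂
    have hT₁ne : T₁.Nonempty := ⟨V.card, by
      show v₁ ∈ activeSet V W' b S' V.card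
      rw [show activeSet V W' b S' V.card = finalActive V W' b S' from rfl, hS'full]
      exact hv₁⟩
    have hT₂ne : T₂.Nonempty := ⟨V.card, by
      show v₂ ∈ activeSet V W' b S' V.card
      rw [show activeSet V W' b S' V.card = finalActive V W' b S' from rfl, hS'full]
      exact hv₂⟩
    -- a generic finishing move, given the right "who activates first" info
    have finish : ∀ x y : ι, x ≠ y → y ∈ V →
        (∀ v, v ≠ y → W' v x = W v x) →
        (∀ v u, u ≠ x → u ≠ y → W' v u = W v u) →
        (∀ t, y ∈ activeSet V W' b S' t → x ∈ activeSet V W' b S' t) →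
        minSeed V W b ≤ minSeed V W' b + 1 := by
      intro x y hxy hyV hagX hagO hfir
      have hdom := key_lemma V W W' b hW x y hxy hagX hagO S' hfir V.card
      have hfull : FullInf V W b (insert y S') := by
        refine Finset.Subset.antisymm
          (activeSet_subset_V V W b (Finset.insert_subset hyV hS'V) V.card) ?_
        calc V = finalActive V W' b S' := hS'full.symm
          _ ⊆ activeSet V W b (insert y S') V.card := hdom
      have hmem : (insert y S').card ∈
          {n | ∃ S : Finset ι, S ⊆ V ∧ S.card = n ∧ FullInf V W b S} :=
        ⟨insert y S', Finset.insert_subset hyV hS'V, rfl, hfull⟩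
      calc minSeed V W b ≤ (insert y S').card := Nat.sInf_le hmem
        _ ≤ S'.card + 1 := Finset.card_insert_le y S'
        _ = minSeed V W' b + 1 := by rw [hS'card]; rfl
    rcases le_total (sInf T₁) (sInf T₂) with h12 | h21
    · -- v₁ activates first; seed v₂
      refine finish v₁ v₂ hne hv₂ ?_ ?_ ?_
      · intro v hv
        exact hagree v v₁ (fun h => hne h.2) (fun h => hv h.1)
      · intro v u hu1 hu2
        exact hagree v u (fun h => hu2 h.2) (fun h => hu1 h.2)
      · intro t ht
        have h2le : sInf T₂ ≤ t := Nat.sInf_le ht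
        have h1mem : sInf T₁ ∈ T₁ := Nat.sInf_mem hT₁ne
        exact activeSet_mono_time V W' b S' (h12.trans h2le) h1mem
    · -- v₂ activates first; seed v₁
      refine finish v₂ v₁ hne.symm hv₁ ?_ ?_ ?_
      · intro v hv
        exact hagree v v₂ (fun h => hv h.1) (fun h => hne h.2.symm)
      · intro v u hu1 hu2
        exact hagree v u (fun h => hu1 h.2) (fun h => hu2 h.2)
      · intro t ht
        have h1le : sInf T₁ ≤ t := Nat.sInf_le ht
        have h2mem : sInf T₂ ∈ T₂ := Nat.sInf_mem hT₂ne
        exact activeSet_mono_time V W' b S' (h21.trans h1le) h2mem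
end

section
/- Correctness of the node-removal seed selection (MSS): let (V, W, b) be an influence network and let v₁, v₂, …, v_m be distinct nodes of V such that for every i ∈ {1, …, m}, b(v_i) ≤ ∑_{z ∈ V \ {v₁, …, v_i}} W(z, v_i). Then the set S = V \ {v₁, …, v_m} of remaining nodes achieves full influenceability. -/
/-!
Influence barricade model: a finite vertex set `V : Finset ι`, edge weights
`W : ι → ι → ℝ` (an edge `u → v` exists iff `W u v > 0`), and barricade
factors `b : ι → ℝ`.  For a seed set `S ⊆ V`, the diffusion process is
`A 0 = S` and `A (t+1) = A t ∪ {u ∈ V : ∑ v ∈ A t, W v u ≥ b u}`.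
-/

open Finset

/-- correctness of the node-removal seed selection (MSS): if
distinct nodes `v 0, v 1, …, v (m-1)` of `V` are removed one at a time and
each removed node `v i` satisfies
`b (v i) ≤ ∑_{z ∈ V \ {v 0, …, v i}} W z (v i)`, then the remaining nodes
form a seed set achieving full influenceability. -/
theorem mss_correct {ι : Type*} [DecidableEq ι]
    (V : Finset ι) (W : ι → ι → ℝ) (b : ι → ℝ)
    (hW : ∀ u w, 0 ≤ W u w) (hb : ∀ u, 0 ≤ b u)
    (m : ℕ) (v : Fin m → ι)
    (hinj : Function.Injective v) (hmem : ∀ i, v i ∈ V)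
    (hcond : ∀ i : Fin m,
      b (v i) ≤
        ∑ z ∈ V \ ((Finset.univ.filter (fun j : Fin m => j ≤ i)).image v),
          W z (v i)) :
    FullInf V W b (V \ Finset.univ.image v) := by
  classical
  set S := V \ Finset.univ.image v with hS
  have hsub : ∀ t, activeSet V W b S t ⊆ V := by
    intro t; induction t with
    | zero => exact sdiff_subset
    | succ t ih =>
      simp only [activeSet, diffStep]
      exact union_subset ih (filter_subset _ _)
  have hmono : ∀ s t, s ≤ t → activeSet V W b S s ⊆ activeSet V W b S t := by
    intro s t h
    induction h with
    | refl => exact subset_rfl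
    | step _ ih =>
      refine ih.trans ?_
      simp only [activeSet, diffStep]
      exact subset_union_left
  have key : ∀ t ≤ m,
      V \ (Finset.univ.filter (fun j : Fin m => (j : ℕ) < m - t)).image v
        ⊆ activeSet V W b S t := by
    intro t
    induction t with
    | zero =>
      intro _
      have : (Finset.univ.filter (fun j : Fin m => (j : ℕ) < m - 0)) =
          (Finset.univ : Finset (Fin m)) := by
        ext j; simp [j.isLt]
      rw [this]
      exact subset_rfl
    | succ t ih =>
      intro ht
      have ht' : t ≤ m := Nat.le_of_succ_le ht
      have ih' := ih ht'
      have hi : m - (t + 1) < m := Nat.sub_lt (Nat.lt_of_lt_of_le (Nat.succ_pos t) ht) (Nat.succ_pos t)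
      set i : ℕ := m - (t + 1) with hidef
      have hmt : m - t = i + 1 := by omega
      intro u hu
      rw [mem_sdiff] at hu
      obtain ⟨huV, hunim⟩ := hu
      by_cases hcase : u ∈ (Finset.univ.filter (fun j : Fin m => (j : ℕ) < i + 1)).image v
      · -- u = v ⟨i, hi⟩
        rw [mem_image] at hcase
        obtain ⟨j, hj, hju⟩ := hcase
        rw [mem_filter] at hj
        have hji : (j : ℕ) = i := by
          rcases Nat.lt_succ_iff_lt_or_eq.mp hj.2 with h | h
          · exfalso
            apply hunim
            rw [← hju]
            exact mem_image_of_mem v (mem_filter.mpr ⟨mem_univ j, h⟩)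
          · exact h
        -- show u active at t+1 via threshold
        show u ∈ diffStep V W b (activeSet V W b S t)
        unfold diffStep
        refine mem_union_right _ (mem_filter.mpr ⟨huV, ?_⟩)
        have hfe : (Finset.univ.filter (fun k : Fin m => k ≤ j)) =
            (Finset.univ.filter (fun k : Fin m => (k : ℕ) < i + 1)) := by
          ext k
          simp [Fin.le_def, hji, Nat.lt_succ_iff]
        have hss : V \ (Finset.univ.filter (fun k : Fin m => (k : ℕ) < i + 1)).image v
            ⊆ activeSet V W b S t := by
          rw [← hmt] at *
          exact ih'
        calc b u = b (v j) := by rw [hju]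
          _ ≤ ∑ z ∈ V \ ((Finset.univ.filter (fun k : Fin m => k ≤ j)).image v), W z (v j) :=
              hcond j
          _ ≤ ∑ z ∈ activeSet V W b S t, W z (v j) := by
              rw [hfe]
              exact Finset.sum_le_sum_of_subset_of_nonneg hss (fun z _ _ => hW z (v j))
          _ = ∑ z ∈ activeSet V W b S t, W z u := by rw [hju]
      · have : u ∈ V \ (Finset.univ.filter (fun j : Fin m => (j : ℕ) < m - t)).image v := by
          rw [hmt]; exact mem_sdiff.mpr ⟨huV, hcase⟩
        exact hmono t (t + 1) (Nat.le_succ t) (ih' this)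
  have hVm : V ⊆ activeSet V W b S m := by
    have := key m le_rfl
    simpa using this
  have hmV : m ≤ V.card := by
    have h1 : (Finset.univ.image v).card = m := by
      rw [Finset.card_image_of_injective _ hinj, Finset.card_univ, Fintype.card_fin]
    have h2 : Finset.univ.image v ⊆ V := by
      intro x hx; rw [mem_image] at hx; obtain ⟨j, _, hj⟩ := hx; exact hj ▸ hmem j
    calc m = (Finset.univ.image v).card := h1.symm
      _ ≤ V.card := Finset.card_le_card h2
  unfold FullInf finalActive
  exact Subset.antisymm (hsub V.card) (hVm.trans (hmono m V.card hmV))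
end

section
/- Seed sets avoiding a fully-dependent added node transfer back to the original network: let (V, W, b) be an influence network, v ∉ V, and let (V ∪ {v}, W', b') extend it (W' agrees with W on V × V, b' agrees with b on V). Let N_in = {w ∈ V : W'(w,v) > 0} and N_out = {w ∈ V : W'(v,w) > 0}. Assume (i) ∑_{w ∈ N'} W'(w,v) < b'(v) ≤ ∑_{w ∈ N_in} W'(w,v) for every proper subset N' ⊊ N_in, (ii) N_out ⊆ N_in, and (iii) W'(v,w) < b'(w) for every w ∈ N_out. Then every seed set S ⊆ V with v ∉ S that achieves full influenceability in (V ∪ {v}, W', b') also achieves full influenceability in (V, W, b). -/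
/-!
Influence barricade model: a finite vertex set `V : Finset ι`, edge weights
`W : ι → ι → ℝ` (an edge `u → v` exists iff `W u v > 0`), and barricade
factors `b : ι → ℝ`.  For a seed set `S ⊆ V`, the diffusion process is
`A 0 = S` and `A (t+1) = A t ∪ {u ∈ V : ∑ v ∈ A t, W v u ≥ b u}`.
-/

open Finset

section Aux
variable {ι : Type*} [DecidableEq ι] (V : Finset ι) (W : ι → ι → ℝ) (b : ι → ℝ) (S : Finset ι)

lemma activeSet_subset_aux (hS : S ⊆ V) : ∀ t, activeSet V W b S t ⊆ V
  | 0 => hS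
  | t + 1 => by
    show diffStep V W b (activeSet V W b S t) ⊆ V
    exact union_subset (activeSet_subset_aux hS t) (filter_subset _ _)

lemma activeSet_mono_aux (t : ℕ) :
    activeSet V W b S t ⊆ activeSet V W b S (t + 1) :=
  subset_union_left

lemma activeSet_stab_aux (t : ℕ)
    (h : activeSet V W b S (t + 1) = activeSet V W b S t) :
    ∀ k, activeSet V W b S (t + k) = activeSet V W b S t
  | 0 => rfl
  | k + 1 => by
    have h1 := activeSet_stab_aux t h k
    show diffStep V W b (activeSet V W b S (t + k)) = _
    rw [h1]; exact h

lemma fullInf_of_succ_aux (hS : S ⊆ V)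
    (h : V ⊆ activeSet V W b S (V.card + 1)) : FullInf V W b S := by
  by_cases hex : ∃ t ≤ V.card, activeSet V W b S (t + 1) = activeSet V W b S t
  · obtain ⟨t, ht, heq⟩ := hex
    have h1 := activeSet_stab_aux V W b S t heq (V.card - t)
    have h2 := activeSet_stab_aux V W b S t heq (V.card + 1 - t)
    rw [Nat.add_sub_cancel' ht] at h1
    rw [Nat.add_sub_cancel' (ht.trans (Nat.le_succ _))] at h2
    unfold FullInf finalActive
    rw [h1, ← h2]
    exact le_antisymm (activeSet_subset_aux V W b S hS _) h
  · push_neg at hex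
    exfalso
    have key : ∀ s, s ≤ V.card + 1 → s ≤ (activeSet V W b S s).card := by
      intro s
      induction s with
      | zero => intro _; exact Nat.zero_le _
      | succ n ih =>
        intro hn
        have hne := hex n (by omega)
        have hss : activeSet V W b S n ⊂ activeSet V W b S (n + 1) :=
          lt_of_le_of_ne (activeSet_mono_aux V W b S n) (Ne.symm hne)
        have := Finset.card_lt_card hss
        have := ih (by omega)
        omega
    have h1 := key (V.card + 1) le_rfl
    have h2 := Finset.card_le_card (activeSet_subset_aux V W b S hS (V.card + 1))
    omega

end Aux

/-- seed sets avoiding a fully-dependent added node transfer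
back to the original network. -/
theorem fullInf_transfer_back_added_node {ι : Type*} [DecidableEq ι]
    (V : Finset ι) (v : ι) (hv : v ∉ V)
    (W W' : ι → ι → ℝ) (b b' : ι → ℝ)
    (hW : ∀ u w, 0 ≤ W u w) (hb : ∀ u, 0 ≤ b u)
    (hW' : ∀ u w, 0 ≤ W' u w) (hb' : ∀ u, 0 ≤ b' u)
    (hagreeW : ∀ u w : ι, u ∈ V → w ∈ V → W' u w = W u w)
    (hagreeb : ∀ u ∈ V, b' u = b u)
    (Nin Nout : Finset ι)
    (hNin : ∀ w : ι, w ∈ Nin ↔ w ∈ V ∧ 0 < W' w v)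
    (hNout : ∀ w : ι, w ∈ Nout ↔ w ∈ V ∧ 0 < W' v w)
    -- (i): no proper subset of `N_in` suffices to activate `v`, but `N_in` does
    (hi₁ : ∀ N' : Finset ι, N' ⊂ Nin → ∑ w ∈ N', W' w v < b' v)
    (hi₂ : b' v ≤ ∑ w ∈ Nin, W' w v)
    -- (ii): the out-neighbors of `v` are among its in-neighbors
    (hii : Nout ⊆ Nin)
    -- (iii): `v` alone cannot activate any of its out-neighbors
    (hiii : ∀ w ∈ Nout, W' v w < b' w)
    (S : Finset ι) (hS : S ⊆ V) (hvS : v ∉ S)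
    (hfull : FullInf (insert v V) W' b' S) :
    FullInf V W b S := by
  set A' := activeSet (insert v V) W' b' S with hA'def
  set A := activeSet V W b S with hAdef
  have hS' : S ⊆ insert v V := hS.trans (subset_insert _ _)
  have hA'sub : ∀ t, A' t ⊆ insert v V := activeSet_subset_aux _ _ _ _ hS'
  have hAsub : ∀ t, A t ⊆ V := activeSet_subset_aux _ _ _ _ hS
  have hvNin : v ∉ Nin := fun h => hv ((hNin v).1 h).1
  have hz_in : ∀ u ∈ V, u ∉ Nin → W' u v = 0 := fun u hu hn =>
    le_antisymm (not_lt.1 fun hc => hn ((hNin u).2 ⟨hu, hc⟩)) (hW' u v)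
  have hz_out : ∀ w ∈ V, w ∉ Nout → W' v w = 0 := fun w hw hn =>
    le_antisymm (not_lt.1 fun hc => hn ((hNout w).2 ⟨hw, hc⟩)) (hW' v w)
  have main : ∀ t, ((A' t).erase v ⊆ A t) ∧ (v ∈ A' t → Nin ⊆ (A' t).erase v) := by
    intro t
    induction t with
    | zero =>
      refine ⟨?_, fun h => absurd h hvS⟩
      intro x hx
      exact (Finset.mem_erase.1 hx).2
    | succ t ih =>
      obtain ⟨ih1, ih2⟩ := ih
      constructor
      · intro x hx
        obtain ⟨hx2, hx1⟩ := Finset.mem_erase.1 hx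
        rcases mem_union.1 hx1 with h | h
        · exact activeSet_mono_aux V W b S t (ih1 (Finset.mem_erase.2 ⟨hx2, h⟩))
        · obtain ⟨hxV', hxsum⟩ := mem_filter.1 h
          have hxV : x ∈ V := (mem_insert.1 hxV').resolve_left hx2
          have sum_le : ∀ (hvx0 : W' v x = 0 ∨ v ∉ A' t),
              ∑ u ∈ A' t, W' u x ≤ ∑ u ∈ A t, W u x := by
            intro hvx0
            have h1 : ∑ u ∈ A' t, W' u x = ∑ u ∈ (A' t).erase v, W' u x := by
              rcases hvx0 with h0 | hvm
              · by_cases hvm : v ∈ A' t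
                · rw [← Finset.add_sum_erase _ _ hvm, h0, zero_add]
                · rw [Finset.erase_eq_of_notMem hvm]
              · rw [Finset.erase_eq_of_notMem hvm]
            have h2 : ∑ u ∈ (A' t).erase v, W' u x = ∑ u ∈ (A' t).erase v, W u x :=
              Finset.sum_congr rfl fun u hu => hagreeW u x (hAsub t (ih1 hu)) hxV
            rw [h1, h2]
            exact Finset.sum_le_sum_of_subset_of_nonneg ih1 (fun i _ _ => hW i x)
          by_cases hvA : v ∈ A' t
          · by_cases hxout : x ∈ Nout
            · exact mem_union_left _ (ih1 (ih2 hvA (hii hxout)))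
            · refine mem_union.2 (Or.inr (mem_filter.2 ⟨hxV, ?_⟩))
              calc b x = b' x := (hagreeb x hxV).symm
                _ ≤ ∑ u ∈ A' t, W' u x := hxsum
                _ ≤ ∑ u ∈ A t, W u x := sum_le (Or.inl (hz_out x hxV hxout))
          · refine mem_union.2 (Or.inr (mem_filter.2 ⟨hxV, ?_⟩))
            calc b x = b' x := (hagreeb x hxV).symm
              _ ≤ ∑ u ∈ A' t, W' u x := hxsum
              _ ≤ ∑ u ∈ A t, W u x := sum_le (Or.inr hvA)
      · intro hvmem
        have step2 : Nin ⊆ (A' t).erase v → Nin ⊆ (A' (t+1)).erase v := by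
          intro h w hw
          have := Finset.mem_erase.1 (h hw)
          exact Finset.mem_erase.2 ⟨this.1, mem_union_left _ this.2⟩
        rcases mem_union.1 hvmem with h | h
        · exact step2 (ih2 h)
        · obtain ⟨_, hsum⟩ := mem_filter.1 h
          by_cases hvA : v ∈ A' t
          · exact step2 (ih2 hvA)
          · have hAV : A' t ⊆ V := fun x hx =>
              (mem_insert.1 (hA'sub t hx)).resolve_left (fun he => hvA (he ▸ hx))
            have heq : ∑ u ∈ A' t ∩ Nin, W' u v = ∑ u ∈ A' t, W' u v :=
              Finset.sum_subset Finset.inter_subset_left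
                (fun u hu hnu => hz_in u (hAV hu)
                  (fun hn => hnu (Finset.mem_inter.2 ⟨hu, hn⟩)))
            have hNineq : A' t ∩ Nin = Nin := by
              by_contra hne
              have hlt := hi₁ _ (lt_of_le_of_ne Finset.inter_subset_right hne)
              rw [heq] at hlt
              linarith
            intro w hw
            have hwA : w ∈ A' t := Finset.mem_inter.1 (hNineq ▸ hw) |>.1
            exact Finset.mem_erase.2 ⟨fun he => hvNin (he ▸ hw),
              mem_union_left _ hwA⟩
  have hcard : (insert v V).card = V.card + 1 := card_insert_of_notMem hv
  have hfin : A' (V.card + 1) = insert v V := by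
    rw [← hcard]; exact hfull
  have hVsub : V ⊆ A (V.card + 1) := by
    intro x hx
    have hxm : x ∈ (A' (V.card + 1)).erase v := by
      rw [hfin]
      exact Finset.mem_erase.2 ⟨fun he => hv (he ▸ hx), mem_insert_of_mem hx⟩
    exact (main _).1 hxm
  exact fullInf_of_succ_aux V W b S hS hVsub
end
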